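/- In the group H = ℤ/4ℤ × ℤ/4ℤ × ℤ × ℤ × ℤ/4ℤ with multiplication (a,b,c,d,e)·(a',b',c',d',e') = (a+a'+2ec', b+b'+2ed', c+c', d+d', e+e'), the subset S = ℤ/4ℤ × ℤ/4ℤ × ℤ × 2ℤ × {0, 2} is a normal abelian subgroup on which the cocycle σ((a,b,c,d,e),(a',b',c',d',e')) = (−1)^{da'} is symmetric (indeed identically 1), and S is maximal among abelian subgroups of H on which σ is symmetric. -/
import Mathlib


abbrev HV : Type := ZMod 4 × ZMod 4 × ℤ × ℤ × ZMod 4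

def hmul (a b : HV) : HV :=
  (a.1 + b.1 + 2 * a.2.2.2.2 * (b.2.2.1 : ZMod 4),
   a.2.1 + b.2.1 + 2 * a.2.2.2.2 * (b.2.2.2.1 : ZMod 4),
   a.2.2.1 + b.2.2.1,
   a.2.2.2.1 + b.2.2.2.1,
   a.2.2.2.2 + b.2.2.2.2)

def he : HV := (0, 0, 0, 0, 0)

def hinv (a : HV) : HV :=
  (2 * a.2.2.2.2 * (a.2.2.1 : ZMod 4) - a.1,
   2 * a.2.2.2.2 * (a.2.2.2.1 : ZMod 4) - a.2.1,
   -a.2.2.1, -a.2.2.2.1, -a.2.2.2.2)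

noncomputable def sigma (a b : HV) : ℂ :=
  (-1 : ℂ) ^ (a.2.2.2.1 * ((b.1.val : ℤ)))

def SH : Set HV :=
  {a | (∃ k : ℤ, a.2.2.2.1 = 2 * k) ∧ (a.2.2.2.2 = 0 ∨ a.2.2.2.2 = 2)}

def IsSubgrp (T : Set HV) : Prop :=
  he ∈ T ∧ (∀ a ∈ T, ∀ b ∈ T, hmul a b ∈ T) ∧ (∀ a ∈ T, hinv a ∈ T)

lemma two_mul_eq_zero {e : ZMod 4} (h : e = 0 ∨ e = 2) : 2 * e = 0 := by
  rcases h with h | h <;> subst h <;> decide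

lemma mem_or_cases {e f : ZMod 4} (h : e = 0 ∨ e = 2) (h' : f = 0 ∨ f = 2) :
    e + f = 0 ∨ e + f = 2 := by
  rcases h with h | h <;> rcases h' with h' | h' <;> subst h <;> subst h' <;> decide

/-- `S` is a normal abelian subgroup of `H` on which `σ` is identically `1` (hence
symmetric), and `S` is maximal among abelian subgroups of `H` on which `σ` is
symmetric. -/
theorem h_S_maximal :
    IsSubgrp SH ∧
    (∀ g : HV, ∀ s ∈ SH, hmul (hinv g) (hmul s g) ∈ SH) ∧
    (∀ s ∈ SH, ∀ t ∈ SH, hmul s t = hmul t s) ∧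
    (∀ s ∈ SH, ∀ t ∈ SH, sigma s t = 1) ∧
    (∀ T : Set HV, IsSubgrp T → SH ⊆ T → SH ≠ T →
      ¬((∀ a ∈ T, ∀ b ∈ T, hmul a b = hmul b a) ∧
        (∀ a ∈ T, ∀ b ∈ T, sigma a b = sigma b a))) := by
  refine ⟨⟨⟨⟨0, by simp [he]⟩, Or.inl rfl⟩, ?_, ?_⟩, ?_, ?_, ?_, ?_⟩
  · rintro a ⟨⟨k, hk⟩, ha⟩ b ⟨⟨l, hl⟩, hb⟩
    exact ⟨⟨k + l, by simp [hmul, hk, hl]; ring⟩, mem_or_cases ha hb⟩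
  · rintro a ⟨⟨k, hk⟩, ha⟩
    refine ⟨⟨-k, by simp [hinv, hk]⟩, ?_⟩
    rcases ha with h | h <;> simp [hinv, h] <;> decide
  · rintro g s ⟨⟨k, hk⟩, hs⟩
    refine ⟨⟨k, by simp [hmul, hinv, hk]⟩, ?_⟩
    rcases hs with h | h <;> simp [hmul, hinv, h]
  · rintro s ⟨_, hs⟩ t ⟨_, ht⟩
    have h1 : 2 * s.2.2.2.2 = 0 := two_mul_eq_zero hs
    have h2 : 2 * t.2.2.2.2 = 0 := two_mul_eq_zero ht
    simp only [hmul, Prod.ext_iff, mul_assoc, h1, h2, zero_mul]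
    refine ⟨by ring, by ring, by ring, by ring, by ring⟩
  · rintro s ⟨⟨k, hk⟩, _⟩ t _
    simp only [sigma, hk]
    rw [show 2 * k * ((t.1.val : ℤ)) = 2 * (k * t.1.val) by ring, zpow_mul]
    norm_num
  · rintro T ⟨heT, hmulT, hinvT⟩ hsub hne ⟨hcomm, hsym⟩
    obtain ⟨t, htT, htS⟩ := Set.exists_of_ssubset (hsub.ssubset_of_ne hne)
    rw [SH, Set.mem_setOf_eq, not_and_or] at htS
    rcases htS with hd | he'
    · -- d is odd: sigma not symmetric with s = (1,0,0,0,0)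
      have hsS : ((1 : ZMod 4), (0 : ZMod 4), (0 : ℤ), (0 : ℤ), (0 : ZMod 4)) ∈ SH :=
        ⟨⟨0, by norm_num⟩, Or.inl rfl⟩
      have hsT := hsub hsS
      have := hsym t htT _ hsT
      simp only [sigma] at this
      have hval : (((1 : ZMod 4).val : ℤ)) = 1 := by decide
      rw [hval] at this
      have hodd : Odd t.2.2.2.1 := by
        rcases Int.even_or_odd t.2.2.2.1 with ⟨m, hm⟩ | h
        · exact absurd ⟨m, by omega⟩ hd
        · exact h
      rw [mul_one, zero_mul, zpow_zero, Odd.neg_one_zpow hodd] at this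
      norm_num at this
    · -- e ∉ {0,2}: fails to commute with s = (0,0,1,0,0)
      have hsS : ((0 : ZMod 4), (0 : ZMod 4), (1 : ℤ), (0 : ℤ), (0 : ZMod 4)) ∈ SH :=
        ⟨⟨0, by norm_num⟩, Or.inl rfl⟩
      have hsT := hsub hsS
      have h := hcomm t htT _ hsT
      simp only [hmul, Prod.ext_iff] at h
      have h1 := h.1
      push_cast at h1
      have h2 : 2 * t.2.2.2.2 = 0 := by
        have : t.1 + 0 + 2 * t.2.2.2.2 * 1 = 0 + t.1 + 2 * 0 * (t.2.2.1 : ZMod 4) := h1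
        rw [mul_one] at this
        linear_combination this
      have key : ∀ e : ZMod 4, 2 * e = 0 → e = 0 ∨ e = 2 := by decide
      have : t.2.2.2.2 = 0 ∨ t.2.2.2.2 = 2 := key _ h2
      exact he' this
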